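/- For all integers i, j ≥ 1 and β > -2, the beta-splitting rule p(i,j) = B(i+β+1, j+β+1)/Z(i+j), where B is the Beta function and Z(n) = Σ_{k=1}^{n-1} C(n-1,k-1) B(k+β+1, n-k+β+1), satisfies the consistency equation p(i,j) = p(i+1,j) + p(i,j+1) + p(i+j,1)·p(i,j). -/

import Mathlib

open Finset

/-- the beta-splitting rule built from the Beta function satisfies
the consistency equation. -/
theorem beta_splitting_consistent
    (β : ℝ) (hβ : β > -2)
    (B : ℝ → ℝ → ℝ)
    (hB : ∀ a b : ℝ, B a b = Real.Gamma a * Real.Gamma b / Real.Gamma (a + b))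
    (Z : ℕ → ℝ)
    (hZ : ∀ n : ℕ, 2 ≤ n →
      Z n = ∑ k ∈ Finset.Icc 1 (n - 1),
        ((n - 1).choose (k - 1) : ℝ) * B ((k : ℝ) + β + 1) (((n : ℝ) - k) + β + 1))
    (p : ℕ → ℕ → ℝ)
    (hp : ∀ i j : ℕ, 1 ≤ i → 1 ≤ j →
      p i j = B ((i : ℝ) + β + 1) ((j : ℝ) + β + 1) / Z (i + j)) :
    ∀ i j : ℕ, 1 ≤ i → 1 ≤ j →
      p i j = p (i + 1) j + p i (j + 1) + p (i + j) 1 * p i j := by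
  -- positivity of B
  have hBpos : ∀ a b : ℝ, 0 < a → 0 < b → 0 < B a b := by
    intro a b ha hb
    rw [hB]
    exact div_pos (mul_pos (Real.Gamma_pos_of_pos ha) (Real.Gamma_pos_of_pos hb))
      (Real.Gamma_pos_of_pos (by linarith))
  -- Beta recurrence
  have hBrec : ∀ a b : ℝ, 0 < a → 0 < b → B (a + 1) b + B a (b + 1) = B a b := by
    intro a b ha hb
    have hab : (0 : ℝ) < a + b := by linarith
    have h1 : Real.Gamma (a + 1) = a * Real.Gamma a := Real.Gamma_add_one (ne_of_gt ha)
    have h2 : Real.Gamma (b + 1) = b * Real.Gamma b := Real.Gamma_add_one (ne_of_gt hb)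
    have h3 : Real.Gamma (a + 1 + b) = (a + b) * Real.Gamma (a + b) := by
      rw [show a + 1 + b = (a + b) + 1 by ring, Real.Gamma_add_one (ne_of_gt hab)]
    have h4 : Real.Gamma (a + (b + 1)) = (a + b) * Real.Gamma (a + b) := by
      rw [show a + (b + 1) = (a + b) + 1 by ring, Real.Gamma_add_one (ne_of_gt hab)]
    rw [hB, hB, hB, h1, h2, h3, h4]
    have h5 : Real.Gamma (a + b) ≠ 0 := ne_of_gt (Real.Gamma_pos_of_pos hab)
    have h6 : (a + b) ≠ 0 := ne_of_gt hab
    field_simp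
  -- the key sum recurrence, written over `range`
  have hT : ∀ m : ℕ,
      (∑ k ∈ range (m + 1),
        ((m + 1).choose k : ℝ) * B ((k : ℝ) + β + 2) (((m : ℝ) + 1) - k + β + 1))
      = (∑ k ∈ range m,
          ((m).choose k : ℝ) * B ((k : ℝ) + β + 2) ((m : ℝ) - k + β + 1))
        + B ((m : ℝ) + β + 2) (β + 2) := by
    intro m
    -- auxiliary sum S = ∑_{k < m+1} C(m,k) B(k+β+2, m+1-k+β+1)
    have hS1 : (∑ k ∈ range (m + 1),
        ((m).choose k : ℝ) * B ((k : ℝ) + β + 2) (((m : ℝ) + 1) - k + β + 1))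
        = (∑ k ∈ range m,
            ((m).choose (k + 1) : ℝ) * B (((k : ℝ) + 1) + β + 2) ((m : ℝ) - k + β + 1))
          + B (β + 2) ((m : ℝ) + β + 2) := by
      rw [Finset.sum_range_succ']
      congr 1
      · apply Finset.sum_congr rfl
        intro k _
        push_cast
        ring_nf
      · simp
        ring_nf
    have hS2 : (∑ k ∈ range (m + 1),
        ((m).choose k : ℝ) * B ((k : ℝ) + β + 2) (((m : ℝ) + 1) - k + β + 1))
        = (∑ k ∈ range m,
            ((m).choose k : ℝ) * B ((k : ℝ) + β + 2) (((m : ℝ) + 1) - k + β + 1))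
          + B ((m : ℝ) + β + 2) (β + 2) := by
      rw [Finset.sum_range_succ]
      congr 1
      simp
      ring_nf
    -- expand LHS: peel off first term, use Pascal
    rw [Finset.sum_range_succ']
    have hP : ∀ k ∈ range m,
        (((m + 1).choose (k + 1) : ℝ) * B (((k : ℝ) + 1) + β + 2) (((m : ℝ) + 1) - ((k : ℝ) + 1) + β + 1))
        = ((m).choose k : ℝ) * B (((k : ℝ) + 1) + β + 2) ((m : ℝ) - k + β + 1)
          + ((m).choose (k + 1) : ℝ) * B (((k : ℝ) + 1) + β + 2) ((m : ℝ) - k + β + 1) := by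
      intro k _
      have harg : ((m : ℝ) + 1) - ((k : ℝ) + 1) + β + 1 = (m : ℝ) - k + β + 1 := by ring
      rw [harg, Nat.choose_succ_succ]
      push_cast
      ring
    calc (∑ k ∈ range m,
            (((m + 1).choose (k + 1) : ℝ)
              * B (((k : ℕ) + 1 : ℕ) + β + 2) (((m : ℝ) + 1) - ((k : ℕ) + 1 : ℕ) + β + 1)))
          + ((m + 1).choose 0 : ℝ) * B (((0 : ℕ) : ℝ) + β + 2) (((m : ℝ) + 1) - ((0 : ℕ) : ℝ) + β + 1)
        = (∑ k ∈ range m,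
            (((m).choose k : ℝ) * B (((k : ℝ) + 1) + β + 2) ((m : ℝ) - k + β + 1)
              + ((m).choose (k + 1) : ℝ) * B (((k : ℝ) + 1) + β + 2) ((m : ℝ) - k + β + 1)))
          + B (β + 2) ((m : ℝ) + β + 2) := by
          congr 1
          · apply Finset.sum_congr rfl
            intro k hk
            have := hP k hk
            push_cast at this ⊢
            linarith [this]
          · simp
            ring_nf
      _ = (∑ k ∈ range m,
            ((m).choose k : ℝ) * B (((k : ℝ) + 1) + β + 2) ((m : ℝ) - k + β + 1))
          + ((∑ k ∈ range m,
            ((m).choose (k + 1) : ℝ) * B (((k : ℝ) + 1) + β + 2) ((m : ℝ) - k + β + 1))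
            + B (β + 2) ((m : ℝ) + β + 2)) := by
          rw [Finset.sum_add_distrib]; ring
      _ = (∑ k ∈ range m,
            ((m).choose k : ℝ) * B (((k : ℝ) + 1) + β + 2) ((m : ℝ) - k + β + 1))
          + ((∑ k ∈ range m,
            ((m).choose k : ℝ) * B ((k : ℝ) + β + 2) (((m : ℝ) + 1) - k + β + 1))
            + B ((m : ℝ) + β + 2) (β + 2)) := by
          rw [← hS1, hS2]
      _ = (∑ k ∈ range m,
          ((m).choose k : ℝ) * B ((k : ℝ) + β + 2) ((m : ℝ) - k + β + 1))
        + B ((m : ℝ) + β + 2) (β + 2) := by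
          rw [← add_assoc, ← Finset.sum_add_distrib]
          congr 1
          apply Finset.sum_congr rfl
          intro k hk
          have hk' : (k : ℝ) ≤ (m : ℝ) - 1 := by
            have := Finset.mem_range.mp hk
            have : (k : ℝ) + 1 ≤ (m : ℝ) := by exact_mod_cast this
            linarith
          have ha : (0 : ℝ) < (k : ℝ) + β + 2 := by
            have : (0 : ℝ) ≤ (k : ℝ) := Nat.cast_nonneg k
            linarith
          have hb : (0 : ℝ) < (m : ℝ) - k + β + 1 := by linarith
          have := hBrec ((k : ℝ) + β + 2) ((m : ℝ) - k + β + 1) ha hb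
          rw [← mul_add]
          congr 1
          rw [show (k : ℝ) + 1 + β + 2 = ((k : ℝ) + β + 2) + 1 by ring,
            show ((m : ℝ) + 1) - k + β + 1 = ((m : ℝ) - k + β + 1) + 1 by ring]
          exact this
  -- Z recurrence: Z (n+1) = Z n + B (n+β+1) (β+2) for n ≥ 2
  have hZrec : ∀ n : ℕ, 2 ≤ n → Z (n + 1) = Z n + B ((n : ℝ) + β + 1) (β + 2) := by
    intro n hn
    obtain ⟨m, rfl⟩ : ∃ m, n = m + 1 := ⟨n - 1, (Nat.succ_pred_eq_of_pos (by omega)).symm⟩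
    rw [hZ (m + 1 + 1) (by omega), hZ (m + 1) (by omega)]
    have e1 : (m + 1 + 1 : ℕ) - 1 = m + 1 := by omega
    have e2 : (m + 1 : ℕ) - 1 = m := by omega
    rw [e1, e2, ← Finset.Ico_add_one_right_eq_Icc, ← Finset.Ico_add_one_right_eq_Icc,
      Finset.sum_Ico_eq_sum_range, Finset.sum_Ico_eq_sum_range]
    have e3 : m + 1 + 1 - 1 = m + 1 := by omega
    have e4 : m + 1 - 1 = m := by omega
    rw [e3, e4]
    have L : ∀ k ∈ range (m + 1),
        (((m + 1).choose (1 + k - 1) : ℕ) : ℝ)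
            * B (((1 + k : ℕ) : ℝ) + β + 1) (((m + 1 + 1 : ℕ) : ℝ) - ((1 + k : ℕ) : ℝ) + β + 1)
        = ((m + 1).choose k : ℝ) * B ((k : ℝ) + β + 2) ((m : ℝ) + 1 - (k : ℝ) + β + 1) := by
      intro k _
      have h1 : 1 + k - 1 = k := by omega
      have h2 : ((1 + k : ℕ) : ℝ) + β + 1 = (k : ℝ) + β + 2 := by push_cast; ring
      have h3 : ((m + 1 + 1 : ℕ) : ℝ) - ((1 + k : ℕ) : ℝ) + β + 1
          = (m : ℝ) + 1 - (k : ℝ) + β + 1 := by push_cast; ring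
      rw [h1, h2, h3]
    have R : ∀ k ∈ range m,
        ((m.choose (1 + k - 1) : ℕ) : ℝ)
            * B (((1 + k : ℕ) : ℝ) + β + 1) (((m + 1 : ℕ) : ℝ) - ((1 + k : ℕ) : ℝ) + β + 1)
        = (m.choose k : ℝ) * B ((k : ℝ) + β + 2) ((m : ℝ) - (k : ℝ) + β + 1) := by
      intro k _
      have h1 : 1 + k - 1 = k := by omega
      have h2 : ((1 + k : ℕ) : ℝ) + β + 1 = (k : ℝ) + β + 2 := by push_cast; ring
      have h3 : ((m + 1 : ℕ) : ℝ) - ((1 + k : ℕ) : ℝ) + β + 1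
          = (m : ℝ) - (k : ℝ) + β + 1 := by push_cast; ring
      rw [h1, h2, h3]
    rw [Finset.sum_congr rfl L, Finset.sum_congr rfl R,
      show ((m + 1 : ℕ) : ℝ) + β + 1 = (m : ℝ) + β + 2 by push_cast; ring]
    exact hT m
  -- positivity of Z
  have hZpos : ∀ n : ℕ, 2 ≤ n → 0 < Z n := by
    intro n hn
    rw [hZ n hn]
    apply Finset.sum_pos
    · intro k hk
      obtain ⟨hk1, hk2⟩ := Finset.mem_Icc.mp hk
      apply mul_pos
      · have : 0 < (n - 1).choose (k - 1) := Nat.choose_pos (by omega)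
        exact_mod_cast this
      · apply hBpos
        · have : (1 : ℝ) ≤ (k : ℝ) := by exact_mod_cast hk1
          linarith
        · have : (k : ℝ) ≤ (n : ℝ) - 1 := by
            have h : k + 1 ≤ n := by omega
            have : (k : ℝ) + 1 ≤ (n : ℝ) := by exact_mod_cast h
            linarith
          linarith
    · exact Finset.nonempty_Icc.mpr (by omega)
  -- main computation
  intro i j hi hj
  have hn2 : 2 ≤ i + j := by omega
  have hZn : 0 < Z (i + j) := hZpos _ hn2
  have hr : Z (i + j + 1) = Z (i + j) + B (((i + j : ℕ) : ℝ) + β + 1) (β + 2) :=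
    hZrec _ hn2
  rw [hp i j hi hj, hp (i + 1) j (by omega) hj, hp i (j + 1) hi (by omega),
    hp (i + j) 1 (by omega) le_rfl]
  have e1 : (i + 1) + j = i + j + 1 := by omega
  have e2 : i + (j + 1) = i + j + 1 := by omega
  have e3 : (i + j) + 1 = i + j + 1 := by omega
  rw [e1, e2, e3, hr]
  have ha : (0 : ℝ) < (i : ℝ) + β + 1 := by
    have : (1 : ℝ) ≤ (i : ℝ) := by exact_mod_cast hi
    linarith
  have hb : (0 : ℝ) < (j : ℝ) + β + 1 := by
    have : (1 : ℝ) ≤ (j : ℝ) := by exact_mod_cast hj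
    linarith
  have hX : B ((i : ℝ) + β + 1) ((j : ℝ) + β + 1)
      = B (((i : ℝ) + β + 1) + 1) ((j : ℝ) + β + 1)
        + B ((i : ℝ) + β + 1) (((j : ℝ) + β + 1) + 1) :=
    (hBrec _ _ ha hb).symm
  have hwpos : (0 : ℝ) < B (((i + j : ℕ) : ℝ) + β + 1) (β + 2) := by
    apply hBpos
    · have : (2 : ℝ) ≤ ((i + j : ℕ) : ℝ) := by exact_mod_cast hn2
      linarith
    · linarith
  have hZ' : Z (i + j) + B (((i + j : ℕ) : ℝ) + β + 1) (β + 2) ≠ 0 := by positivity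
  have hZn' : Z (i + j) ≠ 0 := ne_of_gt hZn
  have c1 : ((i + 1 : ℕ) : ℝ) + β + 1 = ((i : ℝ) + β + 1) + 1 := by push_cast; ring
  have c2 : ((j + 1 : ℕ) : ℝ) + β + 1 = ((j : ℝ) + β + 1) + 1 := by push_cast; ring
  have c3 : ((1 : ℕ) : ℝ) + β + 1 = β + 2 := by push_cast; ring
  rw [c1, c2, c3, hX]
  set u := B ((i : ℝ) + β + 1 + 1) ((j : ℝ) + β + 1) with hu
  set v := B ((i : ℝ) + β + 1) ((j : ℝ) + β + 1 + 1) with hv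
  set w := B (((i + j : ℕ) : ℝ) + β + 1) (β + 2) with hw
  set z := Z (i + j) with hz
  field_simp
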